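/- If the equivalence relation R refines the initial partition (configurations equated only if same barbs) and R is a fixed point of the irredundant refinement function IR, then R is an irredundant bisimulation. -/
import Mathlib


/- A ccp configuration is a pair `⟨P, d⟩` of a process and a store.  The
constraint system is a semilattice `(Con, ≤, ⊔)`. -/

variable {Proc Con : Type*}

section CCP
variable [SemilatticeSup Con]

/-- A configuration `⟨P,d⟩` satisfies the barb `c` iff `c ⊑ d`. -/
def Barb (γ : Proc × Con) (c : Con) : Prop := c ≤ γ.2

/-- Add a constraint to the store of a configuration: `⟨P, d ⊔ a⟩`. -/
def addc (γ : Proc × Con) (a : Con) : Proc × Con := (γ.1, γ.2 ⊔ a)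

/-- Saturated barbed bisimulation w.r.t. the reduction relation `Red`:
a symmetric relation matching barbs, reductions, and closed under adding
arbitrary constraints to the stores. -/
def SBBisim (Red : Proc × Con → Proc × Con → Prop)
    (R : Proc × Con → Proc × Con → Prop) : Prop :=
  Symmetric R ∧ ∀ γ₁ γ₂, R γ₁ γ₂ →
    (∀ c, Barb γ₁ c → Barb γ₂ c) ∧
    (∀ γ₁', Red γ₁ γ₁' → ∃ γ₂', Red γ₂ γ₂' ∧ R γ₁' γ₂') ∧
    (∀ a : Con, R (addc γ₁ a) (addc γ₂ a))

/-- Saturated barbed bisimilarity `∼̇_sb`. -/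
def sbBisimilar (Red : Proc × Con → Proc × Con → Prop)
    (γ₁ γ₂ : Proc × Con) : Prop :=
  ∃ R, SBBisim Red R ∧ R γ₁ γ₂

/-- The transition `γ →β γ₂` is redundant w.r.t. `R`: it is dominated in `R`
by some transition `γ →α γ₁`, i.e. `γ →α γ₁ ⊢_D γ →β ⟨γ₁.1, γ₁.2 ⊔ e⟩`
(with `β = α ⊔ e`, `α ≠ β`) and the derived target is `R`-related to `γ₂`. -/
def Redundant (T : Proc × Con → Con → Proc × Con → Prop)
    (R : Proc × Con → Proc × Con → Prop)
    (γ : Proc × Con) (β : Con) (γ₂ : Proc × Con) : Prop :=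
  ∃ α γ₁ e, T γ α γ₁ ∧ β = α ⊔ e ∧ α ≠ β ∧ R (γ₁.1, γ₁.2 ⊔ e) γ₂

/-- Irredundant bisimulation w.r.t. the labeled transition relation `T`:
barbs are matched, and every transition irredundant in `R` is matched with
equal label into `R`. -/
def IrredBisim (T : Proc × Con → Con → Proc × Con → Prop)
    (R : Proc × Con → Proc × Con → Prop) : Prop :=
  Symmetric R ∧ ∀ γ₁ γ₂, R γ₁ γ₂ →
    (∀ c, Barb γ₁ c → Barb γ₂ c) ∧
    (∀ α γ₁', T γ₁ α γ₁' → ¬ Redundant T R γ₁ α γ₁' →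
      ∃ γ₂', T γ₂ α γ₂' ∧ R γ₁' γ₂')

/-- Irredundant bisimilarity `∼_I`. -/
def irredBisimilar (T : Proc × Con → Con → Proc × Con → Prop)
    (γ₁ γ₂ : Proc × Con) : Prop :=
  ∃ R, IrredBisim T R ∧ R γ₁ γ₂

/-- Syntactic bisimulation: barbs matched and all labeled transitions matched
with identical labels. -/
def SynBisim (T : Proc × Con → Con → Proc × Con → Prop)
    (R : Proc × Con → Proc × Con → Prop) : Prop :=
  Symmetric R ∧ ∀ γ₁ γ₂, R γ₁ γ₂ →
    (∀ c, Barb γ₁ c → Barb γ₂ c) ∧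
    (∀ α γ₁', T γ₁ α γ₁' → ∃ γ₂', T γ₂ α γ₂' ∧ R γ₁' γ₂')

/-- Syntactic bisimilarity `∼_S`. -/
def synBisimilar (T : Proc × Con → Con → Proc × Con → Prop)
    (γ₁ γ₂ : Proc × Con) : Prop :=
  ∃ R, SynBisim T R ∧ R γ₁ γ₂

/-- Soundness of labels: `γ →α γ'` implies the reduction `⟨P, d ⊔ α⟩ ⟶ γ'`. -/
def SoundLTS (T : Proc × Con → Con → Proc × Con → Prop)
    (Red : Proc × Con → Proc × Con → Prop) : Prop :=
  ∀ γ α γ', T γ α γ' → Red (addc γ α) γ'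

/-- Completeness of labels: `⟨P, d ⊔ a⟩ ⟶ γ''` implies there is a labeled
transition `γ →α γ'` with `α ⊑ a` whose target extended by `a` equals `γ''`. -/
def CompleteLTS (T : Proc × Con → Con → Proc × Con → Prop)
    (Red : Proc × Con → Proc × Con → Prop) : Prop :=
  ∀ γ a γ'', Red (addc γ a) γ'' → ∃ α γ', T γ α γ' ∧ α ≤ a ∧ addc γ' a = γ''

end CCP

/-- The refinement function IR of the ccp partition refinement algorithm:
transitions irredundant in P must be matched into P, symmetrized. -/
def IRfun [SemilatticeSup Con] (T : Proc × Con → Con → Proc × Con → Prop)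
    (P : Proc × Con → Proc × Con → Prop) :
    Proc × Con → Proc × Con → Prop := fun γ₁ γ₂ =>
  (∀ α γ₁', T γ₁ α γ₁' → ¬ Redundant T P γ₁ α γ₁' →
    ∃ γ₂', T γ₂ α γ₂' ∧ P γ₁' γ₂') ∧
  (∀ α γ₂', T γ₂ α γ₂' → ¬ Redundant T P γ₂ α γ₂' →
    ∃ γ₁', T γ₁ α γ₁' ∧ P γ₂' γ₁')

/-- If an equivalence relation R refines the initial partition (related
configurations have the same store, hence the same barbs) and R is a fixed
point of the irredundant refinement function IR, then R is an irredundant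
bisimulation. -/
theorem fixedPoint_IR_irredundant_bisim [SemilatticeSup Con]
    (T : Proc × Con → Con → Proc × Con → Prop)
    (R : Proc × Con → Proc × Con → Prop)
    (hequiv : Equivalence R)
    (hinit : ∀ γ₁ γ₂, R γ₁ γ₂ → γ₁.2 = γ₂.2)
    (hfix : ∀ γ₁ γ₂, R γ₁ γ₂ ↔ IRfun T R γ₁ γ₂) :
    IrredBisim T R := by
  refine ⟨fun a b h => hequiv.symm h, fun γ₁ γ₂ h => ⟨?_, ?_⟩⟩
  · intro c hc
    unfold Barb at *
    rw [← hinit _ _ h]; exact hc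
  · exact ((hfix _ _).mp h).1
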